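/- arXiv:2104.11794 — 2 statements merged into one kernel-verified Lean document; each statement's English description precedes it below -/
import Mathlib

section
/- Let A be a nondegenerate symmetric d×d integer matrix, t ∈ ℤ, and S_q(c) = Σ*_{a mod q} Σ_{b mod q} e_q(a((1/2)Ab·b − t) + c·b) (with (1/2)Ab·b ∈ ℤ for b ∈ ℤ^d). Then |S_q(c)| ≤ C_A · q^{d/2+1} uniformly in c ∈ ℤ^d and q ≥ 1, where C_A depends only on A. -/
open Finset

/-- The exponential sum `S_q(c) = Σ*_{a mod q} Σ_{b mod q} e_q(a((1/2)Ab·b − t) + c·b)`. -/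
noncomputable def Sq (d : ℕ) (A : Matrix (Fin d) (Fin d) ℤ) (t : ℤ) (q : ℕ)
    (c : Fin d → ℤ) : ℂ :=
  ∑ a ∈ (Finset.range q).filter (fun a => Nat.gcd a q = 1),
    ∑ b ∈ Fintype.piFinset (fun _ : Fin d => Finset.range q),
      Complex.exp (2 * Real.pi * Complex.I *
        (((a : ℤ) * ((∑ i, ∑ j, A i j * (b i : ℤ) * (b j : ℤ)) / 2 - t)
          + ∑ i, c i * (b i : ℤ) : ℤ) : ℂ) / (q : ℂ))

noncomputable def psiA (q : ℕ) (n : ℤ) : ℂ :=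
  Complex.exp (2 * Real.pi * Complex.I * (n : ℂ) / (q : ℂ))

lemma psiA_zero (q : ℕ) : psiA q 0 = 1 := by simp [psiA]

lemma psiA_add (q : ℕ) (m n : ℤ) : psiA q (m + n) = psiA q m * psiA q n := by
  unfold psiA
  rw [← Complex.exp_add]
  by_cases hq : (q:ℂ) = 0
  · simp [hq]
  · congr 1; field_simp; push_cast; ring

lemma psiA_mul_q (q : ℕ) (k : ℤ) : psiA q ((q:ℤ) * k) = 1 := by
  unfold psiA
  by_cases hq : (q:ℂ) = 0
  · rcases (by exact_mod_cast hq : q = 0) with h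
    simp [h]
  · have : 2 * Real.pi * Complex.I * (((q:ℤ) * k : ℤ) : ℂ) / (q:ℂ) = (k:ℤ) * (2 * Real.pi * Complex.I) := by
      field_simp; push_cast; ring
    rw [this, Complex.exp_int_mul_two_pi_mul_I]

lemma psiA_norm (q : ℕ) (n : ℤ) : ‖psiA q n‖ = 1 := by
  unfold psiA
  by_cases hq : q = 0
  · simp [hq]
  · have : 2 * Real.pi * Complex.I * (n : ℂ) / (q : ℂ) = ((2 * Real.pi * n / q : ℝ) : ℂ) * Complex.I := by
      push_cast; field_simp
    rw [this]
    rw [Complex.norm_exp_ofReal_mul_I]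

lemma psiA_conj (q : ℕ) (n : ℤ) : (starRingEnd ℂ) (psiA q n) = psiA q (-n) := by
  unfold psiA
  rw [← Complex.exp_conj]
  congr 1
  simp [map_div₀, map_mul, Complex.conj_I, map_ofNat]


lemma psiA_congr (q : ℕ) (m n : ℤ) (h : (q:ℤ) ∣ m - n) : psiA q m = psiA q n := by
  obtain ⟨k, hk⟩ := h
  have : m = n + (q:ℤ) * k := by linarith
  rw [this, psiA_add, psiA_mul_q, mul_one]

lemma psiA_sum {ι : Type*} (q : ℕ) (s : Finset ι) (f : ι → ℤ) :
    psiA q (∑ i ∈ s, f i) = ∏ i ∈ s, psiA q (f i) := by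
  induction s using Finset.cons_induction with
  | empty => simp [psiA_zero]
  | cons a s ha ih => rw [Finset.sum_cons, Finset.prod_cons, psiA_add, ih]

lemma psiA_geom (q : ℕ) (hq : q ≠ 0) (m : ℤ) :
    ∑ x ∈ Finset.range q, psiA q (m * x) = if (q:ℤ) ∣ m then (q:ℂ) else 0 := by
  have hq' : (q:ℂ) ≠ 0 := by exact_mod_cast hq
  have hpow : ∀ x : ℕ, psiA q (m * x) = (psiA q m) ^ x := by
    intro x
    unfold psiA
    rw [← Complex.exp_nat_mul]
    congr 1
    field_simp
    push_cast
    ring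
  rw [Finset.sum_congr rfl fun x _ => hpow x]
  by_cases h : (q:ℤ) ∣ m
  · obtain ⟨k, hk⟩ := h
    rw [if_pos ⟨k, hk⟩, show psiA q m = 1 from by rw [hk]; exact psiA_mul_q q k]
    simp
  · rw [if_neg h]
    have h1 : psiA q m ≠ 1 := by
      intro he
      apply h
      unfold psiA at he
      rw [Complex.exp_eq_one_iff] at he
      obtain ⟨n, hn⟩ := he
      have h2 : (2:ℂ) * Real.pi * Complex.I ≠ 0 := by
        simp [Real.pi_ne_zero, Complex.I_ne_zero]
      have : (m:ℂ) = (q:ℂ) * n := by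
        field_simp at hn
        have := hn
        -- rearrange
        apply mul_left_cancel₀ h2
        linear_combination (2 * Real.pi * Complex.I) * this
      refine ⟨n, ?_⟩
      exact_mod_cast this
    rw [geom_sum_eq h1]
    have hcyc : psiA q m ^ q = 1 := by
      rw [← hpow q, mul_comm]
      exact psiA_mul_q q m
    rw [hcyc]
    simp

def Q2A {d : ℕ} (A : Matrix (Fin d) (Fin d) ℤ) (x : Fin d → ℤ) : ℤ :=
  ∑ i, ∑ j, A i j * x i * x j

def LLA {d : ℕ} (A : Matrix (Fin d) (Fin d) ℤ) (w x : Fin d → ℤ) : ℤ :=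
  ∑ j, A.mulVec w j * x j

lemma quadA {d : ℕ} {A : Matrix (Fin d) (Fin d) ℤ} (hA : A.IsSymm) (x w : Fin d → ℤ) :
    Q2A A (x + w) = Q2A A x + Q2A A w + 2 * LLA A w x := by
  have hsym : ∀ i j, A i j = A j i := fun i j => hA.apply j i
  have h1 : ∑ i, ∑ j, A i j * x i * w j = LLA A w x := by
    simp only [LLA, Matrix.mulVec, dotProduct, Finset.sum_mul]
    exact Finset.sum_congr rfl fun i _ => Finset.sum_congr rfl fun j _ => by ring
  have h2 : ∑ i, ∑ j, A i j * w i * x j = LLA A w x := by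
    rw [Finset.sum_comm]
    simp only [LLA, Matrix.mulVec, dotProduct, Finset.sum_mul]
    exact Finset.sum_congr rfl fun j _ => Finset.sum_congr rfl fun i _ => by
      rw [hsym i j]
  have hexp : Q2A A (x + w) = ∑ i, ∑ j,
      (A i j * x i * x j + A i j * x i * w j + A i j * w i * x j + A i j * w i * w j) := by
    exact Finset.sum_congr rfl fun i _ => Finset.sum_congr rfl fun j _ => by
      simp only [Pi.add_apply]; ring
  rw [hexp]
  simp only [Finset.sum_add_distrib]
  rw [h1, h2]
  unfold Q2A
  ring

def EA {d : ℕ} (A : Matrix (Fin d) (Fin d) ℤ) (t a : ℤ) (c : Fin d → ℤ) (x : Fin d → ℤ) : ℤ :=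
  a * (Q2A A x / 2 - t) + ∑ i, c i * x i

def GA {d : ℕ} (A : Matrix (Fin d) (Fin d) ℤ) (a : ℤ) (c : Fin d → ℤ) (w : Fin d → ℤ) : ℤ :=
  a * (Q2A A w / 2) + ∑ i, c i * w i

lemma half_shift {d : ℕ} {A : Matrix (Fin d) (Fin d) ℤ} (hA : A.IsSymm)
    (heven : ∀ b, (2:ℤ) ∣ Q2A A b) (x w : Fin d → ℤ) :
    Q2A A (x + w) / 2 = Q2A A x / 2 + Q2A A w / 2 + LLA A w x := by
  apply mul_left_cancel₀ (two_ne_zero (α := ℤ))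
  rw [Int.mul_ediv_cancel' (heven _), mul_add, mul_add, Int.mul_ediv_cancel' (heven _),
    Int.mul_ediv_cancel' (heven _), quadA hA]

lemma shiftE {d : ℕ} {A : Matrix (Fin d) (Fin d) ℤ} (hA : A.IsSymm)
    (heven : ∀ b, (2:ℤ) ∣ Q2A A b) (t a : ℤ) (c : Fin d → ℤ) (x w : Fin d → ℤ) :
    EA A t a c (x + w) = EA A t a c x + GA A a c w + a * LLA A w x := by
  unfold EA GA
  rw [half_shift hA heven]
  have h : ∑ i, c i * (x + w) i = (∑ i, c i * x i) + ∑ i, c i * w i := by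
    simp [Pi.add_apply, mul_add, Finset.sum_add_distrib]
  rw [h]; ring

lemma Q2_smul {d : ℕ} (A : Matrix (Fin d) (Fin d) ℤ) (q : ℤ) (v : Fin d → ℤ) :
    Q2A A (q • v) = q^2 * Q2A A v := by
  unfold Q2A
  rw [Finset.mul_sum]
  refine Finset.sum_congr rfl fun i _ => ?_
  rw [Finset.mul_sum]
  refine Finset.sum_congr rfl fun j _ => ?_
  simp only [Pi.smul_apply, smul_eq_mul]
  ring

lemma periodicE {d : ℕ} {A : Matrix (Fin d) (Fin d) ℤ} (hA : A.IsSymm)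
    (heven : ∀ b, (2:ℤ) ∣ Q2A A b) (q : ℕ) (t a : ℤ) (c : Fin d → ℤ) (x v : Fin d → ℤ) :
    (q:ℤ) ∣ EA A t a c (x + (q:ℤ) • v) - EA A t a c x := by
  rw [shiftE hA heven]
  have h1 : (q:ℤ) ∣ GA A a c ((q:ℤ) • v) := by
    unfold GA
    apply dvd_add
    · apply Dvd.dvd.mul_left
      rw [Q2_smul,
        show (q:ℤ)^2 * Q2A A v = 2 * ((q:ℤ)^2 * (Q2A A v / 2)) from by
          rw [show (2:ℤ) * ((q:ℤ)^2 * (Q2A A v / 2)) = (q:ℤ)^2 * (2 * (Q2A A v / 2)) from by ring,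
            Int.mul_ediv_cancel' (heven v)],
        Int.mul_ediv_cancel_left _ two_ne_zero]
      exact ⟨q * (Q2A A v / 2), by ring⟩
    · apply Finset.dvd_sum
      intro i _
      simp only [Pi.smul_apply, smul_eq_mul]
      exact ⟨c i * v i, by ring⟩
  have h2 : (q:ℤ) ∣ a * LLA A ((q:ℤ) • v) x := by
    apply Dvd.dvd.mul_left
    unfold LLA
    apply Finset.dvd_sum
    intro j _
    rw [Matrix.mulVec_smul]
    simp only [Pi.smul_apply, smul_eq_mul]
    exact ⟨A.mulVec v j * x j, by ring⟩
  have := dvd_add h1 h2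
  convert this using 1
  case e'_4 => ring
  case e'_2 => rfl

lemma count_single (q : ℕ) (hq : 1 ≤ q) (D : ℤ) (hD : D ≠ 0) :
    ((Finset.range q).filter (fun x : ℕ => (q:ℤ) ∣ D * x)).card ≤ D.natAbs := by
  have hN : 0 < D.natAbs := Int.natAbs_pos.mpr hD
  have hnat : ∀ x : ℕ, (q:ℤ) ∣ D * x → q ∣ D.natAbs * x := by
    intro x h
    have := Int.natAbs_dvd_natAbs.mpr h
    simpa [Int.natAbs_mul] using this
  rw [show D.natAbs = (Finset.range D.natAbs).card from (Finset.card_range _).symm]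
  apply Finset.card_le_card_of_injOn (fun x => D.natAbs * x / q)
  · intro x hx
    rw [Finset.mem_coe, Finset.mem_filter, Finset.mem_range] at hx
    rw [Finset.mem_coe, Finset.mem_range]
    rw [Nat.div_lt_iff_lt_mul (by omega : 0 < q)]
    exact (mul_lt_mul_iff_right₀ hN).mpr hx.1
  · intro x hx y hy hxy
    simp only [Finset.coe_filter, Set.mem_setOf_eq, Finset.mem_range] at hx hy
    dsimp only at hxy
    have h1 : D.natAbs * x = D.natAbs * y := by
      rw [← Nat.div_mul_cancel (hnat x hx.2), ← Nat.div_mul_cancel (hnat y hy.2), hxy]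
    exact Nat.eq_of_mul_eq_mul_left hN h1

lemma count_main {d : ℕ} {A : Matrix (Fin d) (Fin d) ℤ} (hdet : A.det ≠ 0)
    (q : ℕ) (hq : 1 ≤ q) :
    ((Fintype.piFinset (fun _ : Fin d => Finset.range q)).filter
       (fun w => ∀ j, (q:ℤ) ∣ A.mulVec (fun i => (w i : ℤ)) j)).card ≤ A.det.natAbs ^ d := by
  have key : ∀ w : Fin d → ℕ, (∀ j, (q:ℤ) ∣ A.mulVec (fun i => (w i:ℤ)) j) →
      ∀ i, (q:ℤ) ∣ A.det * (w i : ℤ) := by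
    intro w hw i
    have h0 : A.det • (fun i => (w i : ℤ)) = A.adjugate.mulVec (A.mulVec fun i => (w i:ℤ)) := by
      rw [Matrix.mulVec_mulVec, Matrix.adjugate_mul, Matrix.smul_mulVec, Matrix.one_mulVec]
    have h1 : A.det * (w i:ℤ) = ∑ j, A.adjugate i j * A.mulVec (fun i => (w i:ℤ)) j := by
      have h2 := congrFun h0 i
      simpa [Matrix.mulVec, dotProduct, smul_eq_mul] using h2
    rw [h1]
    exact Finset.dvd_sum fun j _ => (hw j).mul_left _
  calc ((Fintype.piFinset (fun _ : Fin d => Finset.range q)).filter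
       (fun w => ∀ j, (q:ℤ) ∣ A.mulVec (fun i => (w i : ℤ)) j)).card
      ≤ (Fintype.piFinset (fun _ : Fin d =>
          (Finset.range q).filter (fun x : ℕ => (q:ℤ) ∣ A.det * x))).card := by
        apply Finset.card_le_card
        intro w hw
        rw [Finset.mem_filter] at hw
        rw [Fintype.mem_piFinset]
        intro i
        rw [Finset.mem_filter]
        exact ⟨(Fintype.mem_piFinset.mp hw.1) i, key w hw.2 i⟩
    _ = ((Finset.range q).filter (fun x : ℕ => (q:ℤ) ∣ A.det * x)).card ^ d := by
        rw [Fintype.card_piFinset]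
        simp
    _ ≤ A.det.natAbs ^ d := Nat.pow_le_pow_left (count_single q hq A.det hdet) d

lemma core_bound {d : ℕ} {A : Matrix (Fin d) (Fin d) ℤ} (hA : A.IsSymm) (hdet : A.det ≠ 0)
    (heven : ∀ b, (2:ℤ) ∣ Q2A A b) (t : ℤ) (q : ℕ) (hq : 1 ≤ q) (a : ℕ)
    (ha : Nat.gcd a q = 1) (c : Fin d → ℤ) :
    ‖∑ b ∈ Fintype.piFinset (fun _ : Fin d => Finset.range q),
        psiA q (EA A t (a:ℤ) c (fun i => (b i : ℤ)))‖ ^ 2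
      ≤ (q:ℝ) ^ d * (A.det.natAbs : ℝ) ^ d := by
  have hq0 : 0 < q := hq
  set B := Fintype.piFinset (fun _ : Fin d => Finset.range q) with hB
  set ι : (Fin d → ℕ) → (Fin d → ℤ) := fun b i => (b i : ℤ) with hι
  set T := ∑ b ∈ B, psiA q (EA A t (a:ℤ) c (ι b)) with hT
  -- Step 1: reindexing the inner sum
  have step1 : ∀ b' ∈ B,
      (∑ b ∈ B, (starRingEnd ℂ) (psiA q (EA A t (a:ℤ) c (ι b'))) * psiA q (EA A t (a:ℤ) c (ι b)))
      = ∑ w ∈ B, psiA q (GA A (a:ℤ) c (ι w)) * psiA q ((a:ℤ) * LLA A (ι w) (ι b')) := by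
    intro b' hb'
    have hb'lt : ∀ i, b' i < q := fun i => Finset.mem_range.mp (Fintype.mem_piFinset.mp hb' i)
    refine (Finset.sum_nbij' (i := fun w k => (b' k + w k) % q)
      (j := fun b k => (b k + (q - b' k)) % q) ?_ ?_ ?_ ?_ ?_).symm
    · intro w hw
      exact Fintype.mem_piFinset.mpr fun k => Finset.mem_range.mpr (Nat.mod_lt _ hq0)
    · intro b hb
      exact Fintype.mem_piFinset.mpr fun k => Finset.mem_range.mpr (Nat.mod_lt _ hq0)
    · intro w hw
      have hwlt : ∀ i, w i < q := fun i => Finset.mem_range.mp (Fintype.mem_piFinset.mp hw i)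
      funext k
      show ((b' k + w k) % q + (q - b' k)) % q = w k
      rw [Nat.mod_add_mod, show b' k + w k + (q - b' k) = w k + q by
        have := hb'lt k; omega, Nat.add_mod_right, Nat.mod_eq_of_lt (hwlt k)]
    · intro b hb
      have hblt : ∀ i, b i < q := fun i => Finset.mem_range.mp (Fintype.mem_piFinset.mp hb i)
      funext k
      show (b' k + (b k + (q - b' k)) % q) % q = b k
      rw [Nat.add_mod_mod, show b' k + (b k + (q - b' k)) = b k + q by
        have := hb'lt k; omega, Nat.add_mod_right, Nat.mod_eq_of_lt (hblt k)]
    · intro w hw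
      -- value equality
      have hshift : ι (fun k => (b' k + w k) % q)
          = (ι b' + ι w) + (q:ℤ) • (fun k => -(((b' k + w k) / q : ℕ) : ℤ)) := by
        funext k
        simp only [ι, Pi.add_apply, Pi.smul_apply, smul_eq_mul]
        have h := Nat.mod_add_div (b' k + w k) q
        have h' : (((b' k + w k) % q : ℕ) : ℤ) + (q:ℤ) * (((b' k + w k) / q : ℕ) : ℤ)
            = (b' k : ℤ) + (w k : ℤ) := by exact_mod_cast congrArg (Nat.cast : ℕ → ℤ) h
        linarith
      have hper : psiA q (EA A t (a:ℤ) c (ι fun k => (b' k + w k) % q))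
          = psiA q (EA A t (a:ℤ) c (ι b' + ι w)) := by
        rw [hshift]
        exact psiA_congr q _ _ (periodicE hA heven q t _ c _ _)
      rw [hper, shiftE hA heven, psiA_add, psiA_add, psiA_conj, ← mul_assoc, ← mul_assoc,
        ← psiA_add, ← psiA_add, ← psiA_add, ← psiA_add]
      exact congrArg (psiA q) (by ring)
  -- Step 2: evaluate inner geometric sums
  have hcop : IsCoprime ((q:ℤ)) ((a:ℤ)) := by
    rw [Int.isCoprime_iff_gcd_eq_one, Int.gcd_natCast_natCast, Nat.gcd_comm]
    exact ha
  have hinner : ∀ w : Fin d → ℕ,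
      (∑ b' ∈ B, psiA q ((a:ℤ) * LLA A (ι w) (ι b')))
      = ∏ j, (if (q:ℤ) ∣ A.mulVec (ι w) j then (q:ℂ) else 0) := by
    intro w
    have h1 : ∀ b' : Fin d → ℕ, psiA q ((a:ℤ) * LLA A (ι w) (ι b'))
        = ∏ j, psiA q (((a:ℤ) * A.mulVec (ι w) j) * ((b' j : ℕ) : ℤ)) := by
      intro b'
      rw [← psiA_sum]
      congr 1
      unfold LLA
      rw [Finset.mul_sum]
      exact Finset.sum_congr rfl fun j _ => by simp only [ι]; ring
    rw [Finset.sum_congr rfl fun b' _ => h1 b']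
    have h2 := Finset.prod_univ_sum (fun _ : Fin d => Finset.range q)
      (fun j (x : ℕ) => psiA q (((a:ℤ) * A.mulVec (ι w) j) * (x:ℤ)))
    rw [hB, ← h2]
    refine Finset.prod_congr rfl fun j _ => ?_
    rw [psiA_geom q (by omega)]
    have hiff : ((q:ℤ) ∣ (a:ℤ) * A.mulVec (ι w) j) ↔ ((q:ℤ) ∣ A.mulVec (ι w) j) :=
      ⟨fun h => hcop.dvd_of_dvd_mul_left h, fun h => h.mul_left _⟩
    rw [if_congr hiff rfl rfl]
  -- Step 3: combine
  have hTT : (starRingEnd ℂ) T * T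
      = ∑ w ∈ B, psiA q (GA A (a:ℤ) c (ι w)) *
          ∏ j, (if (q:ℤ) ∣ A.mulVec (ι w) j then (q:ℂ) else 0) := by
    calc (starRingEnd ℂ) T * T
        = ∑ b' ∈ B, ∑ b ∈ B,
            (starRingEnd ℂ) (psiA q (EA A t (a:ℤ) c (ι b'))) * psiA q (EA A t (a:ℤ) c (ι b)) := by
          rw [hT, map_sum, Finset.sum_mul_sum]
      _ = ∑ b' ∈ B, ∑ w ∈ B, psiA q (GA A (a:ℤ) c (ι w)) * psiA q ((a:ℤ) * LLA A (ι w) (ι b')) :=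
          Finset.sum_congr rfl step1
      _ = ∑ w ∈ B, ∑ b' ∈ B, psiA q (GA A (a:ℤ) c (ι w)) * psiA q ((a:ℤ) * LLA A (ι w) (ι b')) :=
          Finset.sum_comm
      _ = ∑ w ∈ B, psiA q (GA A (a:ℤ) c (ι w)) *
            ∑ b' ∈ B, psiA q ((a:ℤ) * LLA A (ι w) (ι b')) := by
          exact Finset.sum_congr rfl fun w _ => (Finset.mul_sum _ _ _).symm
      _ = _ := Finset.sum_congr rfl fun w _ => by rw [hinner w]
  -- Step 4: take norms
  have hnorm2 : ‖T‖ ^ 2 = ‖(starRingEnd ℂ) T * T‖ := by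
    rw [mul_comm, Complex.mul_conj]
    rw [Complex.norm_real, Real.norm_eq_abs, abs_of_nonneg (Complex.normSq_nonneg T),
      ← Complex.sq_norm]
  rw [hnorm2, hTT]
  calc ‖∑ w ∈ B, psiA q (GA A (a:ℤ) c (ι w)) *
          ∏ j, (if (q:ℤ) ∣ A.mulVec (ι w) j then (q:ℂ) else 0)‖
      ≤ ∑ w ∈ B, ‖psiA q (GA A (a:ℤ) c (ι w)) *
          ∏ j, (if (q:ℤ) ∣ A.mulVec (ι w) j then (q:ℂ) else 0)‖ := norm_sum_le _ _
    _ = ∑ w ∈ B, ∏ j, (if (q:ℤ) ∣ A.mulVec (ι w) j then (q:ℝ) else 0) := by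
        refine Finset.sum_congr rfl fun w _ => ?_
        rw [norm_mul, psiA_norm, one_mul, norm_prod]
        refine Finset.prod_congr rfl fun j _ => ?_
        split
        · simp
        · simp
    _ = ∑ w ∈ B, (if (∀ j, (q:ℤ) ∣ A.mulVec (ι w) j) then (q:ℝ)^d else 0) := by
        refine Finset.sum_congr rfl fun w _ => ?_
        by_cases h : ∀ j, (q:ℤ) ∣ A.mulVec (ι w) j
        · rw [if_pos h]
          rw [Finset.prod_congr rfl fun j _ => if_pos (h j)]
          simp [Finset.prod_const]
        · rw [if_neg h]
          push_neg at h
          obtain ⟨j, hj⟩ := h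
          exact Finset.prod_eq_zero (Finset.mem_univ j) (if_neg hj)
    _ = ((B.filter (fun w => ∀ j, (q:ℤ) ∣ A.mulVec (ι w) j)).card : ℝ) * (q:ℝ)^d := by
        rw [Finset.sum_ite, Finset.sum_const, Finset.sum_const_zero, add_zero, nsmul_eq_mul]
    _ ≤ (q:ℝ) ^ d * (A.det.natAbs : ℝ) ^ d := by
        rw [mul_comm]
        have hc := count_main (A := A) hdet q hq
        have hcast : ((B.filter (fun w => ∀ j, (q:ℤ) ∣ A.mulVec (ι w) j)).card : ℝ)
            ≤ (A.det.natAbs : ℝ) ^ d := by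
          have hle : (B.filter (fun w => ∀ j, (q:ℤ) ∣ A.mulVec (ι w) j)).card
              ≤ A.det.natAbs ^ d := by
            simp only [hB, hι]
            exact hc
          exact_mod_cast hle
        exact mul_le_mul_of_nonneg_left hcast (pow_nonneg (Nat.cast_nonneg q) d)


/-- For a nondegenerate symmetric integer matrix `A`,
`|S_q(c)| ≤ C_A q^(d/2+1)` uniformly in `c` and `q ≥ 1`. -/
theorem Sq_bound (d : ℕ) (A : Matrix (Fin d) (Fin d) ℤ) (hA : A.IsSymm) (hdet : A.det ≠ 0)
    (heven : ∀ b : Fin d → ℤ, (2 : ℤ) ∣ ∑ i, ∑ j, A i j * b i * b j) (t : ℤ) :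
    ∃ C > 0, ∀ q : ℕ, 1 ≤ q → ∀ c : Fin d → ℤ,
      ‖Sq d A t q c‖ ≤ C * (q : ℝ) ^ ((d : ℝ) / 2 + 1) := by
  have hN : (0:ℝ) < ((A.det.natAbs : ℝ)) ^ d :=
    pow_pos (by exact_mod_cast Int.natAbs_pos.mpr hdet) d
  refine ⟨Real.sqrt ((A.det.natAbs : ℝ) ^ d), Real.sqrt_pos.mpr hN, ?_⟩
  intro q hq c
  have hq0 : (0:ℝ) < (q:ℝ) := by exact_mod_cast hq
  have heven' : ∀ b : Fin d → ℤ, (2:ℤ) ∣ Q2A A b := heven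
  have hSq : Sq d A t q c
      = ∑ a ∈ (Finset.range q).filter (fun a => Nat.gcd a q = 1),
          ∑ b ∈ Fintype.piFinset (fun _ : Fin d => Finset.range q),
            psiA q (EA A t (a:ℤ) c (fun i => (b i : ℤ))) := rfl
  rw [hSq]
  have hsqrtq : Real.sqrt ((q:ℝ)^d) = (q:ℝ) ^ ((d:ℝ)/2) := by
    rw [Real.sqrt_eq_rpow, ← Real.rpow_natCast (q:ℝ) d, ← Real.rpow_mul (le_of_lt hq0),
      show (d:ℝ) * (1/2) = (d:ℝ)/2 by ring]
  calc ‖∑ a ∈ (Finset.range q).filter (fun a => Nat.gcd a q = 1),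
          ∑ b ∈ Fintype.piFinset (fun _ : Fin d => Finset.range q),
            psiA q (EA A t (a:ℤ) c (fun i => (b i : ℤ)))‖
      ≤ ∑ a ∈ (Finset.range q).filter (fun a => Nat.gcd a q = 1),
          ‖∑ b ∈ Fintype.piFinset (fun _ : Fin d => Finset.range q),
            psiA q (EA A t (a:ℤ) c (fun i => (b i : ℤ)))‖ := norm_sum_le _ _
    _ ≤ ∑ a ∈ (Finset.range q).filter (fun a => Nat.gcd a q = 1),
          Real.sqrt ((q:ℝ)^d * (A.det.natAbs : ℝ)^d) := by
        refine Finset.sum_le_sum fun a ha => ?_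
        rw [← Real.sqrt_sq (norm_nonneg _)]
        exact Real.sqrt_le_sqrt
          (core_bound hA hdet heven' t q hq a (Finset.mem_filter.mp ha).2 c)
    _ = (((Finset.range q).filter (fun a => Nat.gcd a q = 1)).card : ℝ)
          * Real.sqrt ((q:ℝ)^d * (A.det.natAbs : ℝ)^d) := by
        rw [Finset.sum_const, nsmul_eq_mul]
    _ ≤ (q:ℝ) * Real.sqrt ((q:ℝ)^d * (A.det.natAbs : ℝ)^d) := by
        apply mul_le_mul_of_nonneg_right _ (Real.sqrt_nonneg _)
        have : ((Finset.range q).filter (fun a => Nat.gcd a q = 1)).card ≤ q := by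
          calc _ ≤ (Finset.range q).card := Finset.card_le_card (Finset.filter_subset _ _)
            _ = q := Finset.card_range q
        exact_mod_cast this
    _ = Real.sqrt ((A.det.natAbs : ℝ)^d) * (q:ℝ) ^ ((d:ℝ)/2 + 1) := by
        rw [Real.sqrt_mul (pow_nonneg (le_of_lt hq0) d), hsqrtq,
          Real.rpow_add hq0, Real.rpow_one]
        ring
end

section
/- Let w : ℝ^{2m} → ℝ be continuous with |w(z)| ≤ C⟨z⟩^{-n} for some n > 2m - 2, where ⟨z⟩ = max{1,|z|}. Then w is integrable over the cone Σ_0 = {(x,y) ∈ ℝ^m × ℝ^m : x·y = 0} with respect to the measure μ_0 which disintegrates as μ_0(dz) = |x|^{-1} dx ⊗ d_{x⊥}y (Lebesgue measure on the hyperplane x⊥ ⊂ ℝ^m, fibered over x ∈ ℝ^m∖{0}), i.e. ∫_{ℝ^m∖{0}} |x|^{-1} ∫_{x⊥} |w(x,y)| d_{x⊥}y dx < ∞. -/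
open MeasureTheory Set Metric Module

lemma aux_rpow_half {b s u : ℝ} (hb : 0 ≤ b) (hu : 0 < u) (h : u ≤ 2 * s) :
    s ^ (-b) ≤ 2 ^ b * u ^ (-b) := by
  have h2 : 0 < u / 2 := by positivity
  have h3 : s ^ (-b) ≤ (u / 2) ^ (-b) :=
    Real.rpow_le_rpow_of_nonpos h2 (by linarith) (neg_nonpos.mpr hb)
  refine h3.trans_eq ?_
  rw [div_eq_mul_inv, Real.mul_rpow hu.le (by norm_num), Real.inv_rpow (by norm_num),
    ← Real.rpow_neg (by norm_num), neg_neg, mul_comm]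

lemma aux_split {b : ℝ} (hb : 0 ≤ b) (p q : ℝ) :
    (max 1 (max p q)) ^ (-(2 * b)) ≤ (max 1 p) ^ (-b) * (max 1 q) ^ (-b) := by
  set M := max 1 (max p q) with hM'
  have hM : (1 : ℝ) ≤ M := le_max_left _ _
  have hA : (1 : ℝ) ≤ max 1 p := le_max_left _ _
  have hB : (1 : ℝ) ≤ max 1 q := le_max_left _ _
  have hAM : max 1 p ≤ M := max_le_max le_rfl (le_max_left _ _)
  have hBM : max 1 q ≤ M := max_le_max le_rfl (le_max_right _ _)
  have h1 : M ^ (-(2 * b)) = M ^ (-b) * M ^ (-b) := by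
    rw [← Real.rpow_add (by linarith)]; ring_nf
  rw [h1]
  exact mul_le_mul
    (Real.rpow_le_rpow_of_nonpos (by linarith) hAM (neg_nonpos.mpr hb))
    (Real.rpow_le_rpow_of_nonpos (by linarith) hBM (neg_nonpos.mpr hb))
    (Real.rpow_nonneg (by linarith) _) (Real.rpow_nonneg (by linarith) _)

lemma aux_lintegral_norm_eq {F : Type*} [NormedAddCommGroup F] [InnerProductSpace ℝ F]
    [FiniteDimensional ℝ F] [MeasurableSpace F] [BorelSpace F]
    (φ : ℝ → ENNReal) (hφ : Measurable φ) :
    ∫⁻ y : F, φ ‖y‖ = ∫⁻ y : EuclideanSpace ℝ (Fin (finrank ℝ F)), φ ‖y‖ := by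
  have h := (stdOrthonormalBasis ℝ F).measurePreserving_repr
  have := h.lintegral_comp (f := fun z : EuclideanSpace ℝ (Fin (finrank ℝ F)) => φ ‖z‖)
    (hφ.comp measurable_norm)
  rw [← this]
  simp


lemma aux_ball_inv (m : ℕ) (hm : 2 ≤ m) :
    ∫⁻ x : EuclideanSpace ℝ (Fin m) in Metric.closedBall 0 1,
      ENNReal.ofReal (‖x‖⁻¹) < ⊤ := by
  set μ := (volume : Measure (EuclideanSpace ℝ (Fin m))).restrict (Metric.closedBall 0 1) with hμ
  have hmeas : Measurable fun x : EuclideanSpace ℝ (Fin m) => ‖x‖⁻¹ := measurable_norm.inv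
  have key := lintegral_eq_lintegral_meas_le μ
    (Filter.Eventually.of_forall fun x => by positivity) hmeas.aemeasurable
  rw [show ∫⁻ x in Metric.closedBall (0 : EuclideanSpace ℝ (Fin m)) 1,
      ENNReal.ofReal (‖x‖⁻¹) = ∫⁻ x, ENNReal.ofReal (‖x‖⁻¹) ∂μ from rfl, key]
  have hV : (volume (Metric.closedBall (0 : EuclideanSpace ℝ (Fin m)) 1)) < ⊤ :=
    measure_closedBall_lt_top
  calc
    ∫⁻ t in Ioi (0:ℝ), μ {a | t ≤ ‖a‖⁻¹}
        ≤ ∫⁻ t in Ioc (0:ℝ) 1 ∪ Ioi 1, μ {a | t ≤ ‖a‖⁻¹} :=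
      lintegral_mono_set Ioi_subset_Ioc_union_Ioi
    _ ≤ (∫⁻ t in Ioc (0:ℝ) 1, μ {a | t ≤ ‖a‖⁻¹}) + ∫⁻ t in Ioi (1:ℝ), μ {a | t ≤ ‖a‖⁻¹} :=
      lintegral_union_le _ _ _
    _ < ⊤ := by
      refine ENNReal.add_lt_top.2 ⟨?_, ?_⟩
      · calc
          ∫⁻ t in Ioc (0:ℝ) 1, μ {a | t ≤ ‖a‖⁻¹}
              ≤ ∫⁻ _ in Ioc (0:ℝ) 1, volume (Metric.closedBall (0 : EuclideanSpace ℝ (Fin m)) 1) := by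
            refine lintegral_mono fun t => ?_
            exact le_trans (measure_mono (subset_univ _))
              (by rw [hμ, Measure.restrict_apply_univ])
          _ = volume (Metric.closedBall (0 : EuclideanSpace ℝ (Fin m)) 1) * volume (Ioc (0:ℝ) 1) :=
            setLIntegral_const _ _
          _ < ⊤ := by
            apply ENNReal.mul_lt_top hV
            simp [Real.volume_Ioc]
      · have hsub : ∀ t ∈ Ioi (1:ℝ),
            μ {a | t ≤ ‖a‖⁻¹} ≤ ENNReal.ofReal ((t⁻¹) ^ m) *
              volume (Metric.ball (0 : EuclideanSpace ℝ (Fin m)) 1) := by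
          intro t ht
          have ht0 : (0:ℝ) < t := lt_trans one_pos ht
          have h1 : {a : EuclideanSpace ℝ (Fin m) | t ≤ ‖a‖⁻¹} ⊆
              Metric.closedBall 0 t⁻¹ := by
            intro a ha
            simp only [mem_setOf_eq] at ha
            rw [mem_closedBall_zero_iff]
            rcases eq_or_lt_of_le (norm_nonneg a) with h | h
            · rw [← h]; positivity
            · have : ‖a‖ = (‖a‖⁻¹)⁻¹ := (inv_inv _).symm
              rw [this]
              exact inv_anti₀ ht0 ha
          calc
            μ {a | t ≤ ‖a‖⁻¹} ≤ volume (Metric.closedBall (0:EuclideanSpace ℝ (Fin m)) t⁻¹) :=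
              le_trans (measure_mono h1) (Measure.restrict_le_self _)
            _ = ENNReal.ofReal ((t⁻¹) ^ finrank ℝ (EuclideanSpace ℝ (Fin m))) *
                volume (Metric.ball (0 : EuclideanSpace ℝ (Fin m)) 1) :=
              Measure.addHaar_closedBall _ _ (by positivity)
            _ = _ := by rw [finrank_euclideanSpace_fin]
        calc
          ∫⁻ t in Ioi (1:ℝ), μ {a | t ≤ ‖a‖⁻¹}
              ≤ ∫⁻ t in Ioi (1:ℝ), ENNReal.ofReal ((t⁻¹) ^ m) *
                volume (Metric.ball (0 : EuclideanSpace ℝ (Fin m)) 1) :=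
            setLIntegral_mono' measurableSet_Ioi hsub
          _ = (∫⁻ t in Ioi (1:ℝ), ENNReal.ofReal ((t⁻¹) ^ m)) *
                volume (Metric.ball (0 : EuclideanSpace ℝ (Fin m)) 1) :=
            lintegral_mul_const' _ _ measure_ball_lt_top.ne
          _ < ⊤ := by
            apply ENNReal.mul_lt_top _ measure_ball_lt_top
            have heq : ∀ t ∈ Ioi (1:ℝ), ENNReal.ofReal ((t⁻¹) ^ m) =
                ENNReal.ofReal (t ^ (-(m:ℝ))) := by
              intro t ht
              have ht0 : (0:ℝ) < t := lt_trans one_pos ht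
              rw [← Real.rpow_natCast t⁻¹ m, Real.inv_rpow ht0.le, ← Real.rpow_neg ht0.le]
            rw [setLIntegral_congr_fun measurableSet_Ioi heq]
            refine IntegrableOn.setLIntegral_lt_top ?_
            refine integrableOn_Ioi_rpow_of_lt ?_ one_pos
            have : (2:ℝ) ≤ (m:ℝ) := by exact_mod_cast hm
            linarith
lemma aux_outer (m : ℕ) (hm : 2 ≤ m) {b : ℝ} (hb : (m : ℝ) - 1 < b) :
    ∫⁻ x : EuclideanSpace ℝ (Fin m),
      ENNReal.ofReal (‖x‖⁻¹ * (max 1 ‖x‖) ^ (-b)) < ⊤ := by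
  have hm' : (2:ℝ) ≤ (m:ℝ) := by exact_mod_cast hm
  have hb0 : 0 < b := by linarith
  rw [← lintegral_add_compl
    (fun x : EuclideanSpace ℝ (Fin m) => ENNReal.ofReal (‖x‖⁻¹ * (max 1 ‖x‖) ^ (-b)))
    (measurableSet_closedBall (x := (0 : EuclideanSpace ℝ (Fin m))) (ε := (1:ℝ)))]
  refine ENNReal.add_lt_top.2 ⟨?_, ?_⟩
  · -- inside the ball
    refine lt_of_le_of_lt (lintegral_mono fun x => ?_) (aux_ball_inv m hm)
    apply ENNReal.ofReal_le_ofReal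
    have ht : (max 1 ‖x‖) ^ (-b) ≤ 1 :=
      Real.rpow_le_one_of_one_le_of_nonpos (le_max_left _ _) (neg_nonpos.mpr hb0.le)
    exact mul_le_of_le_one_right (by positivity) ht
  · -- outside the ball
    have hptwise : ∀ x ∈ (Metric.closedBall (0 : EuclideanSpace ℝ (Fin m)) 1)ᶜ,
        ENNReal.ofReal (‖x‖⁻¹ * (max 1 ‖x‖) ^ (-b)) ≤
          ENNReal.ofReal (2 ^ (1 + b) * (1 + ‖x‖) ^ (-(1 + b))) := by
      intro x hx
      have hx1 : 1 < ‖x‖ := by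
        simpa [mem_closedBall, dist_zero_right] using hx
      have hx0 : (0:ℝ) < ‖x‖ := lt_trans one_pos hx1
      apply ENNReal.ofReal_le_ofReal
      have e1 : ‖x‖⁻¹ * (max 1 ‖x‖) ^ (-b) = ‖x‖ ^ (-(1 + b)) := by
        rw [max_eq_right hx1.le, neg_add, Real.rpow_add hx0, Real.rpow_neg_one]
      rw [e1]
      exact aux_rpow_half (b := 1 + b) (s := ‖x‖) (u := 1 + ‖x‖) (by linarith) (by linarith) (by linarith)
    refine lt_of_le_of_lt (setLIntegral_mono' measurableSet_closedBall.compl hptwise) ?_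
    refine lt_of_le_of_lt (setLIntegral_le_lintegral _ _) ?_
    have : ∀ x : EuclideanSpace ℝ (Fin m),
        ENNReal.ofReal (2 ^ (1 + b) * (1 + ‖x‖) ^ (-(1 + b))) =
          ENNReal.ofReal (2 ^ (1 + b)) * ENNReal.ofReal ((1 + ‖x‖) ^ (-(1 + b))) := fun x =>
      ENNReal.ofReal_mul (by positivity)
    simp_rw [this]
    rw [lintegral_const_mul' _ _ ENNReal.ofReal_ne_top]
    apply ENNReal.mul_lt_top ENNReal.ofReal_lt_top
    apply finite_integral_one_add_norm
    rw [finrank_euclideanSpace_fin]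
    linarith


/-- If `w : ℝ^m × ℝ^m → ℝ` is continuous with `|w z| ≤ C ⟨z⟩^{-n}` for some
`n > 2m - 2`, then `w` is integrable over the cone `{x·y = 0}` with respect to the
measure `μ₀` disintegrating as `|x|^{-1} dx ⊗ d_{x⊥} y`:
`∫_{x} |x|^{-1} ∫_{x⊥} |w(x,y)| dy dx < ∞`. -/
theorem cone_integrable (m : ℕ) (hm : 2 ≤ m)
    (w : EuclideanSpace ℝ (Fin m) × EuclideanSpace ℝ (Fin m) → ℝ)
    (hw : Continuous w) (C n : ℝ) (hn : 2 * (m : ℝ) - 2 < n)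
    (hbd : ∀ z, |w z| ≤ C * (max 1 ‖z‖) ^ (-n)) :
    ∫⁻ x : EuclideanSpace ℝ (Fin m),
      ENNReal.ofReal (‖x‖⁻¹) *
        ∫⁻ y : ((ℝ ∙ x)ᗮ : Submodule ℝ (EuclideanSpace ℝ (Fin m))),
          ENNReal.ofReal |w (x, (y : EuclideanSpace ℝ (Fin m)))| < ⊤ := by
  have hm' : (2:ℝ) ≤ (m:ℝ) := by exact_mod_cast hm
  set b := n / 2 with hbdef
  have hb : (m : ℝ) - 1 < b := by simp only [hbdef]; linarith
  have hb0 : 0 < b := by linarith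
  have hC : 0 ≤ C := by
    have h0 := hbd 0
    have : (max 1 ‖(0 : EuclideanSpace ℝ (Fin m) × EuclideanSpace ℝ (Fin m))‖) ^ (-n) = 1 := by
      simp
    rw [this, mul_one] at h0
    exact le_trans (abs_nonneg _) h0
  -- the uniform inner constant
  set J : ENNReal := ∫⁻ y : EuclideanSpace ℝ (Fin (m - 1)),
      ENNReal.ofReal ((1 + ‖y‖) ^ (-b)) with hJdef
  have hJ : J < ⊤ := by
    apply finite_integral_one_add_norm
    rw [finrank_euclideanSpace_fin]
    rw [Nat.cast_sub (le_trans one_le_two hm), Nat.cast_one]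
    exact hb
  -- measurability of φ
  have hφ : Measurable fun t : ℝ => ENNReal.ofReal ((1 + t) ^ (-b)) := by fun_prop
  -- pointwise bound
  have hbound : ∀ x : EuclideanSpace ℝ (Fin m),
      (ENNReal.ofReal (‖x‖⁻¹) *
        ∫⁻ y : ((ℝ ∙ x)ᗮ : Submodule ℝ (EuclideanSpace ℝ (Fin m))),
          ENNReal.ofReal |w (x, (y : EuclideanSpace ℝ (Fin m)))|) ≤
      ENNReal.ofReal (‖x‖⁻¹ * (max 1 ‖x‖) ^ (-b)) * (ENNReal.ofReal (C * 2 ^ b) * J) := by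
    intro x
    by_cases hx : x = 0
    · subst hx
      simp
    · -- rank of the orthogonal complement
      have hrank : finrank ℝ ((ℝ ∙ x)ᗮ : Submodule ℝ (EuclideanSpace ℝ (Fin m))) = m - 1 := by
        have h1 : finrank ℝ (ℝ ∙ x) = 1 := finrank_span_singleton hx
        have h2 := Submodule.finrank_add_finrank_orthogonal (K := (ℝ ∙ x))
        rw [h1, finrank_euclideanSpace_fin] at h2
        omega
      -- pointwise bound on the fiber
      have hfiber : ∀ y : ((ℝ ∙ x)ᗮ : Submodule ℝ (EuclideanSpace ℝ (Fin m))),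
          ENNReal.ofReal |w (x, (y : EuclideanSpace ℝ (Fin m)))| ≤
            ENNReal.ofReal (C * (max 1 ‖x‖) ^ (-b) * 2 ^ b) *
              ENNReal.ofReal ((1 + ‖(y : EuclideanSpace ℝ (Fin m))‖) ^ (-b)) := by
        intro y
        set v := (y : EuclideanSpace ℝ (Fin m)) with hv
        rw [← ENNReal.ofReal_mul (by positivity)]
        apply ENNReal.ofReal_le_ofReal
        have h1 : |w (x, v)| ≤ C * (max 1 (max ‖x‖ ‖v‖)) ^ (-n) := by
          have := hbd (x, v)
          rwa [Prod.norm_def] at this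
        have h2 : (max 1 (max ‖x‖ ‖v‖)) ^ (-n) ≤ (max 1 ‖x‖) ^ (-b) * (max 1 ‖v‖) ^ (-b) := by
          have : -n = -(2 * b) := by rw [hbdef]; ring
          rw [this]
          exact aux_split hb0.le _ _
        have h3 : (max 1 ‖v‖) ^ (-b) ≤ 2 ^ b * (1 + ‖v‖) ^ (-b) :=
          aux_rpow_half (s := max 1 ‖v‖) (u := 1 + ‖v‖) hb0.le (by positivity)
            (by rcases le_total 1 ‖v‖ with h | h
                · rw [max_eq_right h]; linarith
                · rw [max_eq_left h]; linarith [norm_nonneg v])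
        calc |w (x, v)| ≤ C * (max 1 (max ‖x‖ ‖v‖)) ^ (-n) := h1
          _ ≤ C * ((max 1 ‖x‖) ^ (-b) * (max 1 ‖v‖) ^ (-b)) := by
              apply mul_le_mul_of_nonneg_left h2 hC
          _ ≤ C * ((max 1 ‖x‖) ^ (-b) * (2 ^ b * (1 + ‖v‖) ^ (-b))) := by
              apply mul_le_mul_of_nonneg_left _ hC
              apply mul_le_mul_of_nonneg_left h3 (by positivity)
          _ = C * (max 1 ‖x‖) ^ (-b) * 2 ^ b * ((1 + ‖v‖) ^ (-b)) := by ring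
      -- integrate the fiber bound
      have hinner : (∫⁻ y : ((ℝ ∙ x)ᗮ : Submodule ℝ (EuclideanSpace ℝ (Fin m))),
          ENNReal.ofReal |w (x, (y : EuclideanSpace ℝ (Fin m)))|) ≤
            ENNReal.ofReal (C * (max 1 ‖x‖) ^ (-b) * 2 ^ b) * J := by
        calc (∫⁻ y : ((ℝ ∙ x)ᗮ : Submodule ℝ (EuclideanSpace ℝ (Fin m))),
            ENNReal.ofReal |w (x, (y : EuclideanSpace ℝ (Fin m)))|)
            ≤ ∫⁻ y : ((ℝ ∙ x)ᗮ : Submodule ℝ (EuclideanSpace ℝ (Fin m))),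
                ENNReal.ofReal (C * (max 1 ‖x‖) ^ (-b) * 2 ^ b) *
                  ENNReal.ofReal ((1 + ‖(y : EuclideanSpace ℝ (Fin m))‖) ^ (-b)) :=
              lintegral_mono hfiber
          _ = ENNReal.ofReal (C * (max 1 ‖x‖) ^ (-b) * 2 ^ b) *
                ∫⁻ y : ((ℝ ∙ x)ᗮ : Submodule ℝ (EuclideanSpace ℝ (Fin m))),
                  ENNReal.ofReal ((1 + ‖(y : EuclideanSpace ℝ (Fin m))‖) ^ (-b)) :=
              lintegral_const_mul' _ _ ENNReal.ofReal_ne_top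
          _ = ENNReal.ofReal (C * (max 1 ‖x‖) ^ (-b) * 2 ^ b) * J := by
              congr 1
              have hnorm : ∀ y : ((ℝ ∙ x)ᗮ : Submodule ℝ (EuclideanSpace ℝ (Fin m))),
                  ‖(y : EuclideanSpace ℝ (Fin m))‖ = ‖y‖ := fun y => rfl
              simp_rw [hnorm]
              rw [aux_lintegral_norm_eq (fun t => ENNReal.ofReal ((1 + t) ^ (-b))) hφ, hrank]
      calc ENNReal.ofReal (‖x‖⁻¹) *
            (∫⁻ y : ((ℝ ∙ x)ᗮ : Submodule ℝ (EuclideanSpace ℝ (Fin m))),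
              ENNReal.ofReal |w (x, (y : EuclideanSpace ℝ (Fin m)))|)
          ≤ ENNReal.ofReal (‖x‖⁻¹) *
              (ENNReal.ofReal (C * (max 1 ‖x‖) ^ (-b) * 2 ^ b) * J) :=
            mul_le_mul_right hinner _
        _ = ENNReal.ofReal (‖x‖⁻¹ * (max 1 ‖x‖) ^ (-b)) * (ENNReal.ofReal (C * 2 ^ b) * J) := by
            rw [← mul_assoc, ← ENNReal.ofReal_mul (by positivity),
              show ‖x‖⁻¹ * (C * (max 1 ‖x‖) ^ (-b) * 2 ^ b) =
                (‖x‖⁻¹ * (max 1 ‖x‖) ^ (-b)) * (C * 2 ^ b) by ring,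
              ENNReal.ofReal_mul (by positivity), mul_assoc]
  refine lt_of_le_of_lt (lintegral_mono hbound) ?_
  rw [lintegral_mul_const' _ _ (by
    exact ENNReal.mul_ne_top ENNReal.ofReal_ne_top hJ.ne)]
  exact ENNReal.mul_lt_top (aux_outer m hm hb)
    (ENNReal.mul_lt_top ENNReal.ofReal_lt_top hJ)
end
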